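/- Let G = (V,E) be a graph, σ = v_1,…,v_n an ordering of V, and c a coloring of the pairs (i,j), i<j, with colors {red, green, blue} that is proper to (G, σ): green pairs are exactly the edges of G, for every i the green pairs containing i form an interval of indices, red pairs (i,j) have j less than all green partners of i, blue pairs (i,j) have i greater than all green partners of j, and the order conditions of a proper coloring hold. Define i_red as the largest i with (i, i+1) red (or 0 if no red pair exists) and i_blue as the smallest j with (j−1, j) blue (or n+1 if no blue pair exists). Then i_red + 1 ≤ i_blue − 1; moreover (i,j) is red for all i < j ≤ i_red, (i,j) is blue for all i_blue ≤ i < j, and (i,j) is green for all i_red < i < j < i_blue. -/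
import Mathlib


inductive PCGColor : Type
  | red : PCGColor
  | green : PCGColor
  | blue : PCGColor
  deriving DecidableEq

/-- Structure of a proper coloring of the pairs `(i,j)`, `1 ≤ i < j ≤ n`:
red pairs are downward closed, blue pairs upward closed, `i_red` is the largest `i`
with `(i,i+1)` red (`0` if none), `i_blue` is the smallest `j` with `(j-1,j)` blue
(`n+1` if none). Then `i_red + 1 ≤ i_blue - 1`, pairs `(i,j)` with `i < j ≤ i_red`
are red, pairs with `i_blue ≤ i < j` are blue, and pairs with
`i_red < i < j < i_blue` are green. -/
theorem proper_coloring_trichotomy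
    (n : ℕ) (hn : 2 ≤ n) (c : ℕ → ℕ → PCGColor) (ir ib : ℕ)
    (Hred : ∀ i j i' j', 1 ≤ i' → i' < j' → i' ≤ i → j' ≤ j → i < j → j ≤ n →
      c i j = PCGColor.red → c i' j' = PCGColor.red)
    (Hblue : ∀ i j i' j', 1 ≤ i → i < j → i ≤ i' → j ≤ j' → i' < j' → j' ≤ n →
      c i j = PCGColor.blue → c i' j' = PCGColor.blue)
    (hir1 : ∀ i, 1 ≤ i → i < n → c i (i + 1) = PCGColor.red → i ≤ ir)
    (hir2 : ir = 0 ∨ (1 ≤ ir ∧ ir < n ∧ c ir (ir + 1) = PCGColor.red))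
    (hib1 : ∀ j, 2 ≤ j → j ≤ n → c (j - 1) j = PCGColor.blue → ib ≤ j)
    (hib2 : ib = n + 1 ∨ (2 ≤ ib ∧ ib ≤ n ∧ c (ib - 1) ib = PCGColor.blue)) :
    ir + 1 ≤ ib - 1 ∧
    (∀ i j, 1 ≤ i → i < j → j ≤ ir → c i j = PCGColor.red) ∧
    (∀ i j, ib ≤ i → i < j → j ≤ n → c i j = PCGColor.blue) ∧
    (∀ i j, ir < i → i < j → j < ib → c i j = PCGColor.green) := by

  have hib2' : 2 ≤ ib := by
    rcases hib2 with h | h <;> omega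
  have hgreen : ∀ i j, ir < i → i < j → j < ib → c i j = PCGColor.green := by
    intro i j hi hij hj
    have hjn : j ≤ n := by rcases hib2 with h | h <;> omega
    cases hc : c i j with
    | red =>
      have h1 : c i (i + 1) = PCGColor.red :=
        Hred i j i (i + 1) (by omega) (by omega) le_rfl (by omega) hij hjn hc
      have := hir1 i (by omega) (by omega) h1
      omega
    | green => rfl
    | blue =>
      have h1 : c (j - 1) j = PCGColor.blue :=
        Hblue i j (j - 1) j (by omega) hij (by omega) le_rfl (by omega) hjn hc
      have := hib1 j (by omega) hjn h1
      omega
  refine ⟨?_, ?_, ?_, hgreen⟩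
  · rcases hir2 with h | h
    · omega
    · rcases hib2 with h' | h'
      · omega
      · by_contra hlt
        have : c (ib - 1) ib = PCGColor.red :=
          Hred ir (ir + 1) (ib - 1) ib (by omega) (by omega) (by omega) (by omega)
            (by omega) (by omega) h.2.2
        rw [h'.2.2] at this
        exact PCGColor.noConfusion this
  · intro i j hi hij hj
    rcases hir2 with h | h
    · omega
    · exact Hred ir (ir + 1) i j hi hij (by omega) (by omega) (by omega) (by omega) h.2.2
  · intro i j hi hij hj
    rcases hib2 with h | h
    · omega
    · exact Hblue (ib - 1) ib i j (by omega) (by omega) (by omega) (by omega) hij hj h.2.2
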